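/- Let $\mu_n$ and $\mu$ be $d$-dimensional permutons with distribution functions $F_n$ and $F$ respectively. Then $\mu_n$ converges weakly to $\mu$ if and only if $\|F_n - F\|_\infty \to 0$, i.e., $F_n$ converges to $F$ uniformly on $[0,1]^d$. -/

import Mathlib

open MeasureTheory Filter Topology

/-- A `d`-dimensional permuton: a Borel probability measure on `[0,1]^d` with uniform
one-dimensional marginals. -/
def IsPermuton {d : ℕ} (μ : Measure (Fin d → ℝ)) : Prop :=
  IsProbabilityMeasure μ ∧
    ∀ (i : Fin d) (a b : ℝ), 0 ≤ a → a ≤ b → b ≤ 1 →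
      μ {x | x i ∈ Set.Icc a b} = ENNReal.ofReal (b - a)

/-- The cumulative distribution function `F(x) = μ([0,x₁] × ⋯ × [0,x_d])`. -/
noncomputable def cdf {d : ℕ} (μ : Measure (Fin d → ℝ)) (x : Fin d → ℝ) : ℝ :=
  (μ {y | ∀ i, y i ≤ x i}).toReal

namespace PermutonProofAux

variable {d : ℕ}

def lset (x : Fin d → ℝ) : Set (Fin d → ℝ) := {y | ∀ i, y i ≤ x i}

lemma lset_eq (x : Fin d → ℝ) : lset x = Set.pi Set.univ (fun i => Set.Iic (x i)) := by
  ext y; simp [lset, Set.mem_pi, Pi.le_def]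

lemma measurableSet_lset (x : Fin d → ℝ) : MeasurableSet (lset x) := by
  rw [lset_eq]; exact MeasurableSet.univ_pi (fun i => measurableSet_Iic)

lemma cdf_eq (μ : Measure (Fin d → ℝ)) (x : Fin d → ℝ) : cdf μ x = (μ (lset x)).toReal := rfl

variable {μ : Measure (Fin d → ℝ)}

lemma null_out (h : IsPermuton μ) (i : Fin d) : μ {y | y i < 0 ∨ 1 < y i} = 0 := by
  have hm : MeasurableSet {y : Fin d → ℝ | y i ∈ Set.Icc (0:ℝ) 1} :=
    (measurableSet_Icc : MeasurableSet (Set.Icc (0:ℝ) 1)).preimage (measurable_pi_apply i)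
  haveI := h.1
  have h1 : μ {y : Fin d → ℝ | y i ∈ Set.Icc (0:ℝ) 1} = 1 := by
    rw [h.2 i 0 1 le_rfl zero_le_one le_rfl]; norm_num
  have hc : μ {y : Fin d → ℝ | y i ∈ Set.Icc (0:ℝ) 1}ᶜ = 0 := by
    rw [measure_compl hm (measure_ne_top _ _), h1, measure_univ, tsub_self]
  refine measure_mono_null ?_ hc
  intro y hy
  simp only [Set.mem_compl_iff, Set.mem_setOf_eq, Set.mem_Icc, not_and_or, not_le]
  rcases hy with h' | h'
  · exact Or.inl h'
  · exact Or.inr h'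

lemma null_lt_zero (h : IsPermuton μ) (i : Fin d) : μ {y | y i < 0} = 0 :=
  measure_mono_null (fun _ hy => Or.inl hy) (null_out h i)

lemma null_gt_one (h : IsPermuton μ) (i : Fin d) : μ {y | 1 < y i} = 0 :=
  measure_mono_null (fun _ hy => Or.inr hy) (null_out h i)

lemma null_eq (h : IsPermuton μ) (i : Fin d) (c : ℝ) : μ {y | y i = c} = 0 := by
  rcases le_or_gt 0 c with h0 | h0
  · rcases le_or_gt c 1 with h1 | h1
    · have : {y : Fin d → ℝ | y i = c} = {y | y i ∈ Set.Icc c c} := by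
        ext y; simp [le_antisymm_iff, and_comm]
      rw [this, h.2 i c c h0 le_rfl h1, sub_self, ENNReal.ofReal_zero]
    · exact measure_mono_null
        (fun y hy => by simp only [Set.mem_setOf_eq] at hy ⊢; linarith) (null_gt_one h i)
  · exact measure_mono_null
      (fun y hy => by simp only [Set.mem_setOf_eq] at hy ⊢; linarith) (null_lt_zero h i)

lemma cdf_nonneg (μ : Measure (Fin d → ℝ)) (x : Fin d → ℝ) : 0 ≤ cdf μ x :=
  ENNReal.toReal_nonneg

lemma cdf_le_one (h : IsPermuton μ) (x : Fin d → ℝ) : cdf μ x ≤ 1 := by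
  haveI := h.1
  rw [cdf_eq]
  have := measure_mono (Set.subset_univ (lset x)) (μ := μ)
  rw [measure_univ] at this
  simpa using ENNReal.toReal_mono (by simp) this

lemma cdf_mono (h : IsPermuton μ) {x w : Fin d → ℝ} (hxw : ∀ i, x i ≤ w i) :
    cdf μ x ≤ cdf μ w := by
  haveI := h.1
  rw [cdf_eq, cdf_eq]
  exact ENNReal.toReal_mono (measure_ne_top _ _)
    (measure_mono (fun y hy i => le_trans (hy i) (hxw i)))

lemma cdf_le_add (h : IsPermuton μ) {z w : Fin d → ℝ}
    (hz0 : ∀ i, 0 ≤ z i) (hz1 : ∀ i, z i ≤ 1) (hzw : ∀ i, z i ≤ w i) :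
    cdf μ w ≤ cdf μ z + ∑ i, (w i - z i) := by
  haveI := h.1
  have hsub : lset w ⊆ lset z ∪
      ((⋃ i, {y : Fin d → ℝ | y i ∈ Set.Icc (z i) (min (w i) 1)}) ∪ ⋃ i, {y | 1 < y i}) := by
    intro y hy
    by_cases hz : ∀ i, y i ≤ z i
    · exact Or.inl hz
    · push_neg at hz
      obtain ⟨i, hi⟩ := hz
      rcases le_or_gt (y i) 1 with h1 | h1
      · exact Or.inr (Or.inl (Set.mem_iUnion.2 ⟨i, ⟨hi.le, le_min (hy i) h1⟩⟩))
      · exact Or.inr (Or.inr (Set.mem_iUnion.2 ⟨i, h1⟩))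
  have key : μ (lset w) ≤ μ (lset z) + ∑ i, ENNReal.ofReal (min (w i) 1 - z i) := by
    calc μ (lset w) ≤ μ (lset z) + μ ((⋃ i, {y : Fin d → ℝ | y i ∈ Set.Icc (z i) (min (w i) 1)})
          ∪ ⋃ i, {y | 1 < y i}) := le_trans (measure_mono hsub) (measure_union_le _ _)
      _ ≤ μ (lset z) + (μ (⋃ i, {y : Fin d → ℝ | y i ∈ Set.Icc (z i) (min (w i) 1)})
          + μ (⋃ i, {y : Fin d → ℝ | 1 < y i})) := by
            exact add_le_add le_rfl (measure_union_le _ _)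
      _ ≤ μ (lset z) + (∑ i, μ {y : Fin d → ℝ | y i ∈ Set.Icc (z i) (min (w i) 1)} + 0) := by
            refine add_le_add le_rfl (add_le_add (measure_iUnion_fintype_le _ _) ?_)
            exact le_of_eq (measure_iUnion_null (fun i => null_gt_one h i))
      _ = μ (lset z) + ∑ i, ENNReal.ofReal (min (w i) 1 - z i) := by
            rw [add_zero]
            congr 1
            refine Finset.sum_congr rfl (fun i _ => ?_)
            exact h.2 i (z i) (min (w i) 1) (hz0 i) (le_min (hzw i) (hz1 i)) (min_le_right _ _)
  have hne : μ (lset z) + ∑ i, ENNReal.ofReal (min (w i) 1 - z i) ≠ ⊤ := by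
    refine ENNReal.add_ne_top.2 ⟨measure_ne_top _ _, ?_⟩
    exact (ENNReal.sum_lt_top.2 (fun i _ => ENNReal.ofReal_lt_top)).ne
  have := ENNReal.toReal_mono hne key
  rw [ENNReal.toReal_add (measure_ne_top _ _) (ENNReal.sum_lt_top.2
    (fun i _ => ENNReal.ofReal_lt_top)).ne, ENNReal.toReal_sum
    (fun i _ => ENNReal.ofReal_ne_top)] at this
  rw [cdf_eq, cdf_eq]
  refine le_trans this (add_le_add le_rfl (Finset.sum_le_sum (fun i _ => ?_)))
  rw [ENNReal.toReal_ofReal (by linarith [le_min (hzw i) (hz1 i), min_le_right (w i) (1:ℝ)])]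
  linarith [min_le_left (w i) (1:ℝ)]

lemma frontier_lset_subset (x : Fin d → ℝ) :
    frontier (lset x) ⊆ ⋃ i, {y : Fin d → ℝ | y i = x i} := by
  have hcl : IsClosed (lset x) := by
    have : lset x = ⋂ i, {y : Fin d → ℝ | y i ≤ x i} := by
      ext y; simp [lset]
    rw [this]
    exact isClosed_iInter fun i => isClosed_Iic.preimage (continuous_apply i)
  have hopen : IsOpen {y : Fin d → ℝ | ∀ i, y i < x i} := by
    have : {y : Fin d → ℝ | ∀ i, y i < x i} = ⋂ i, {y : Fin d → ℝ | y i < x i} := by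
      ext y; simp
    rw [this]
    exact isOpen_iInter_of_finite fun i => isOpen_Iio.preimage (continuous_apply i)
  rw [hcl.frontier_eq]
  intro y hy
  obtain ⟨hy1, hy2⟩ := hy
  have : ¬ ∀ i, y i < x i := fun hc => hy2 (hopen.subset_interior_iff.2
    (fun z hz i => (hz i).le) hc)
  push_neg at this
  obtain ⟨i, hi⟩ := this
  exact Set.mem_iUnion.2 ⟨i, le_antisymm (hy1 i) hi⟩

lemma null_frontier_lset (h : IsPermuton μ) (x : Fin d → ℝ) : μ (frontier (lset x)) = 0 :=
  measure_mono_null (frontier_lset_subset x) (measure_iUnion_null fun i => null_eq h i (x i))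

lemma tendsto_cdf_of_weak {μs : ℕ → Measure (Fin d → ℝ)}
    (hμs : ∀ n, IsPermuton (μs n)) (hμ : IsPermuton μ)
    (H : ∀ f : BoundedContinuousFunction (Fin d → ℝ) ℝ,
        Tendsto (fun n => ∫ x, f x ∂(μs n)) atTop (𝓝 (∫ x, f x ∂μ)))
    (x : Fin d → ℝ) :
    Tendsto (fun n => cdf (μs n) x) atTop (𝓝 (cdf μ x)) := by
  haveI := hμ.1
  let P : ℕ → ProbabilityMeasure (Fin d → ℝ) := fun n => ⟨μs n, (hμs n).1⟩
  let Pm : ProbabilityMeasure (Fin d → ℝ) := ⟨μ, hμ.1⟩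
  have hconv : Tendsto P atTop (𝓝 Pm) :=
    ProbabilityMeasure.tendsto_iff_forall_integral_tendsto.2 H
  have key := ProbabilityMeasure.tendsto_measure_of_null_frontier_of_tendsto' hconv
    (E := lset x) (null_frontier_lset hμ x)
  have := (ENNReal.tendsto_toReal (measure_ne_top μ (lset x))).comp key
  exact this

/-! ### Boxes and the inclusion–exclusion formula -/

def box (a b : Fin d → ℝ) : Set (Fin d → ℝ) := {y | ∀ i, y i ∈ Set.Ioc (a i) (b i)}

def corner (a b : Fin d → ℝ) (t : Finset (Fin d)) : Fin d → ℝ :=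
  fun i => if i ∈ t then b i else a i

lemma measurableSet_box (a b : Fin d → ℝ) : MeasurableSet (box a b) := by
  have : box a b = Set.pi Set.univ (fun i => Set.Ioc (a i) (b i)) := by
    ext y; simp [box, Set.mem_pi]
  rw [this]
  exact MeasurableSet.univ_pi fun i => measurableSet_Ioc

lemma ind_box (a b : Fin d → ℝ) (hab : ∀ i, a i ≤ b i) (y : Fin d → ℝ) :
    (box a b).indicator (1 : (Fin d → ℝ) → ℝ) y =
      ∑ t : Finset (Fin d), (-1:ℝ)^((Finset.univ \ t).card) *
        (lset (corner a b t)).indicator (1 : (Fin d → ℝ) → ℝ) y := by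
  classical
  simp only [Set.indicator_apply, Pi.one_apply]
  have step1 : (if y ∈ box a b then (1:ℝ) else 0) =
      ∏ i, ((if y i ≤ b i then (1:ℝ) else 0) - (if y i ≤ a i then (1:ℝ) else 0)) := by
    have hfac : ∀ i, ((if y i ≤ b i then (1:ℝ) else 0) - (if y i ≤ a i then (1:ℝ) else 0))
        = if y i ∈ Set.Ioc (a i) (b i) then (1:ℝ) else 0 := by
      intro i
      by_cases h1 : y i ≤ a i
      · have h2 : y i ≤ b i := le_trans h1 (hab i)
        simp [h1, h2, Set.mem_Ioc, not_lt.2 h1]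
      · by_cases h2 : y i ≤ b i
        · simp [h1, h2, Set.mem_Ioc, not_le.1 h1]
        · simp [h1, h2, Set.mem_Ioc]
    simp only [hfac, Fintype.prod_boole]
    simp [box, Set.mem_Ioc]
  rw [step1]
  have step2 : ∀ i : Fin d, ((if y i ≤ b i then (1:ℝ) else 0) - (if y i ≤ a i then (1:ℝ) else 0))
      = ((if y i ≤ b i then (1:ℝ) else 0) + (-(if y i ≤ a i then (1:ℝ) else 0))) := by
    intro i; ring
  simp only [step2]
  rw [Finset.prod_add, Finset.powerset_univ]
  refine Finset.sum_congr rfl (fun t _ => ?_)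
  have hneg : (∏ i ∈ Finset.univ \ t, (-(if y i ≤ a i then (1:ℝ) else 0)))
      = (-1:ℝ)^((Finset.univ \ t).card) *
        ∏ i ∈ Finset.univ \ t, (if y i ≤ a i then (1:ℝ) else 0) :=
    calc (∏ i ∈ Finset.univ \ t, (-(if y i ≤ a i then (1:ℝ) else 0)))
        = ∏ i ∈ Finset.univ \ t, ((-1:ℝ) * (if y i ≤ a i then (1:ℝ) else 0)) :=
          Finset.prod_congr rfl (fun i _ => by ring)
      _ = (∏ _i ∈ Finset.univ \ t, (-1:ℝ)) *
            ∏ i ∈ Finset.univ \ t, (if y i ≤ a i then (1:ℝ) else 0) := Finset.prod_mul_distrib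
      _ = _ := by rw [Finset.prod_const]
  have hb : ∀ i ∈ t, (if y i ≤ b i then (1:ℝ) else 0) = if y i ≤ corner a b t i then 1 else 0 := by
    intro i hi; simp [corner, hi]
  have ha : ∀ i ∈ Finset.univ \ t, (if y i ≤ a i then (1:ℝ) else 0)
      = if y i ≤ corner a b t i then 1 else 0 := by
    intro i hi
    simp only [Finset.mem_sdiff] at hi
    simp [corner, hi.2]
  rw [hneg, Finset.prod_congr rfl hb, Finset.prod_congr rfl ha, mul_left_comm,
    mul_comm (∏ i ∈ t, if y i ≤ corner a b t i then (1:ℝ) else 0),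
    Finset.prod_sdiff (Finset.subset_univ t), Fintype.prod_boole]
  have hmem : (y ∈ lset (corner a b t)) = ∀ i, y i ≤ corner a b t i := rfl
  simp [hmem]

lemma meas_box (ν : Measure (Fin d → ℝ)) (hν : IsProbabilityMeasure ν)
    (a b : Fin d → ℝ) (hab : ∀ i, a i ≤ b i) :
    (ν (box a b)).toReal = ∑ t : Finset (Fin d),
      (-1:ℝ)^((Finset.univ \ t).card) * cdf ν (corner a b t) := by
  haveI := hν
  have hint : ∀ x : Fin d → ℝ, Integrable ((lset x).indicator (1 : (Fin d → ℝ) → ℝ)) ν := by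
    intro x
    rw [integrable_indicator_iff (measurableSet_lset x)]
    exact (integrable_const (1:ℝ)).integrableOn
  calc (ν (box a b)).toReal = ∫ y, (box a b).indicator (1 : (Fin d → ℝ) → ℝ) y ∂ν := by
        rw [integral_indicator_one (measurableSet_box a b)]
        rfl
    _ = ∫ y, ∑ t : Finset (Fin d), (-1:ℝ)^((Finset.univ \ t).card) *
          (lset (corner a b t)).indicator (1 : (Fin d → ℝ) → ℝ) y ∂ν := by
        refine integral_congr_ae (Filter.Eventually.of_forall (fun y => ?_))
        exact ind_box a b hab y
    _ = ∑ t : Finset (Fin d), ∫ y, (-1:ℝ)^((Finset.univ \ t).card) *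
          (lset (corner a b t)).indicator (1 : (Fin d → ℝ) → ℝ) y ∂ν := by
        refine integral_finset_sum _ (fun t _ => ?_)
        exact (hint (corner a b t)).const_mul _
    _ = ∑ t : Finset (Fin d), (-1:ℝ)^((Finset.univ \ t).card) * cdf ν (corner a b t) := by
        refine Finset.sum_congr rfl (fun t _ => ?_)
        rw [integral_const_mul, integral_indicator_one (measurableSet_lset _), cdf_eq]
        rfl

/-! ### Elementary limit helpers -/

lemma tendsto_zero_of_forall {S : ℕ → ℝ} (h0 : ∀ n, 0 ≤ S n)
    (h : ∀ ε > (0:ℝ), ∀ᶠ n in atTop, S n ≤ ε) : Tendsto S atTop (𝓝 0) := by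
  rw [tendsto_order]
  constructor
  · intro a ha
    filter_upwards with n
    exact lt_of_lt_of_le ha (h0 n)
  · intro a ha
    filter_upwards [h (a/2) (by linarith)] with n hn
    linarith

lemma abs_tendsto_zero {u : ℕ → ℝ} {a : ℝ} (h : Tendsto u atTop (𝓝 a)) :
    Tendsto (fun n => |u n - a|) atTop (𝓝 0) := by
  have := (h.sub (tendsto_const_nhds (x := a))).abs
  simpa using this

lemma tendsto_atTop_of_abs_sub {u : ℕ → ℝ} {c : ℝ}
    (h : ∀ ε > (0:ℝ), ∀ᶠ n in atTop, |u n - c| ≤ ε) : Tendsto u atTop (𝓝 c) := by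
  rw [Metric.tendsto_atTop]
  intro ε hε
  obtain ⟨N, hN⟩ := eventually_atTop.1 (h (ε/2) (by linarith))
  refine ⟨N, fun n hn => ?_⟩
  rw [Real.dist_eq]
  exact lt_of_le_of_lt (hN n hn) (by linarith)

instance boxNonempty : Nonempty {z : Fin d → ℝ // ∀ i, z i ∈ Set.Icc (0:ℝ) 1} :=
  ⟨⟨fun _ => 0, fun _ => ⟨le_rfl, zero_le_one⟩⟩⟩

/-! ### Forward direction: pointwise convergence implies uniform convergence -/

lemma forward_unif {μs : ℕ → Measure (Fin d → ℝ)}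
    (hμs : ∀ n, IsPermuton (μs n)) (hμ : IsPermuton μ)
    (hpt : ∀ x : Fin d → ℝ, Tendsto (fun n => cdf (μs n) x) atTop (𝓝 (cdf μ x))) :
    Tendsto (fun n => ⨆ z : {z : Fin d → ℝ // ∀ i, z i ∈ Set.Icc (0:ℝ) 1},
      |cdf (μs n) z.1 - cdf μ z.1|) atTop (𝓝 0) := by
  refine tendsto_zero_of_forall (fun n => ?_) (fun ε hε => ?_)
  · exact Real.iSup_nonneg (fun z => abs_nonneg _)
  obtain ⟨m, hm⟩ := exists_nat_gt (3 * (d:ℝ) / ε)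
  have hm0 : (0:ℝ) < m := lt_of_le_of_lt (by positivity) hm
  have h3d : 3 * (d:ℝ) < ε * m := by
    rw [div_lt_iff₀ hε] at hm; linarith
  have hdm : (d:ℝ) * (1/m) < ε/3 := by
    rw [mul_one_div, div_lt_div_iff₀ hm0 (by norm_num : (0:ℝ) < 3)]
    linarith
  set gridpt : (Fin d → Fin (m+2)) → (Fin d → ℝ) := fun k i => ((k i : ℕ) : ℝ)/m with hgridpt
  have hgrid_ev : ∀ᶠ n in atTop, ∀ k : Fin d → Fin (m+2),
      |cdf (μs n) (gridpt k) - cdf μ (gridpt k)| < ε/3 := by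
    rw [eventually_all]
    intro k
    exact (abs_tendsto_zero (hpt (gridpt k))).eventually_lt_const (by linarith)
  filter_upwards [hgrid_ev] with n hn
  refine ciSup_le (fun z => ?_)
  obtain ⟨z, hz⟩ := z
  simp only
  set l : Fin d → ℕ := fun i => ⌊z i * m⌋₊ with hldef
  have hlm : ∀ i, l i ≤ m := by
    intro i
    have : z i * m ≤ m := by
      have := (hz i).2
      nlinarith
    calc l i = ⌊z i * m⌋₊ := rfl
      _ ≤ ⌊(m:ℝ)⌋₊ := Nat.floor_le_floor this
      _ = m := Nat.floor_natCast m
  set K1 : Fin d → Fin (m+2) := fun i => ⟨l i, by have := hlm i; omega⟩ with hK1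
  set K2 : Fin d → Fin (m+2) := fun i => ⟨l i + 1, by have := hlm i; omega⟩ with hK2
  set L := gridpt K1 with hL
  set U := gridpt K2 with hU
  have hLv : ∀ i, L i = (l i : ℝ)/m := fun i => rfl
  have hUv : ∀ i, U i = ((l i : ℝ) + 1)/m := by
    intro i; simp [hU, hgridpt, hK2]
  have hLz : ∀ i, L i ≤ z i := by
    intro i
    rw [hLv, div_le_iff₀ hm0]
    exact Nat.floor_le (mul_nonneg (hz i).1 hm0.le)
  have hzU : ∀ i, z i ≤ U i := by
    intro i
    rw [hUv, le_div_iff₀ hm0]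
    exact (Nat.lt_floor_add_one (z i * m)).le
  have hL0 : ∀ i, 0 ≤ L i := fun i => by rw [hLv]; positivity
  have hL1 : ∀ i, L i ≤ 1 := fun i => le_trans (hLz i) (hz i).2
  have hLU : ∀ i, L i ≤ U i := fun i => le_trans (hLz i) (hzU i)
  have hsum : ∑ i : Fin d, (U i - L i) ≤ (d:ℝ) * (1/m) := by
    have : ∀ i : Fin d, U i - L i = 1/m := by
      intro i
      rw [hUv, hLv, div_sub_div_same, add_sub_cancel_left]
    rw [Finset.sum_congr rfl (fun i _ => this i), Finset.sum_const, Finset.card_univ,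
      Fintype.card_fin, nsmul_eq_mul]
  have hLip : cdf μ U ≤ cdf μ L + ε/3 := by
    have := cdf_le_add hμ hL0 hL1 hLU
    linarith
  have habsU := abs_lt.1 (hn K2)
  have habsL := abs_lt.1 (hn K1)
  rw [← hU] at habsU
  rw [← hL] at habsL
  have m1 : cdf (μs n) z ≤ cdf (μs n) U := cdf_mono (hμs n) hzU
  have m2 : cdf μ L ≤ cdf μ z := cdf_mono hμ hLz
  have m3 : cdf μ z ≤ cdf μ U := cdf_mono hμ hzU
  have m4 : cdf (μs n) L ≤ cdf (μs n) z := cdf_mono (hμs n) hLz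
  rw [abs_le]
  constructor
  · linarith [habsL.1]
  · linarith [habsU.2]

/-! ### Reverse direction -/

lemma rev_pointwise {μs : ℕ → Measure (Fin d → ℝ)}
    (hμs : ∀ n, IsPermuton (μs n)) (hμ : IsPermuton μ)
    (hS : Tendsto (fun n => ⨆ z : {z : Fin d → ℝ // ∀ i, z i ∈ Set.Icc (0:ℝ) 1},
      |cdf (μs n) z.1 - cdf μ z.1|) atTop (𝓝 0))
    (z : Fin d → ℝ) (hz : ∀ i, z i ∈ Set.Icc (0:ℝ) 1) :
    Tendsto (fun n => cdf (μs n) z) atTop (𝓝 (cdf μ z)) := by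
  have hbdd : ∀ n, BddAbove (Set.range fun z : {z : Fin d → ℝ // ∀ i, z i ∈ Set.Icc (0:ℝ) 1} =>
      |cdf (μs n) z.1 - cdf μ z.1|) := by
    intro n
    refine ⟨2, fun x hx => ?_⟩
    obtain ⟨w, rfl⟩ := hx
    have h1 := cdf_nonneg (μs n) w.1
    have h2 := cdf_le_one (hμs n) w.1
    have h3 := cdf_nonneg μ w.1
    have h4 := cdf_le_one hμ w.1
    rw [abs_le]; constructor <;> linarith
  have hle : ∀ n, |cdf (μs n) z - cdf μ z| ≤
      ⨆ z : {z : Fin d → ℝ // ∀ i, z i ∈ Set.Icc (0:ℝ) 1}, |cdf (μs n) z.1 - cdf μ z.1| :=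
    fun n => le_ciSup (hbdd n) ⟨z, hz⟩
  have habs : Tendsto (fun n => |cdf (μs n) z - cdf μ z|) atTop (𝓝 0) :=
    squeeze_zero (fun n => abs_nonneg _) hle hS
  have hneg : Tendsto (fun n => -|cdf (μs n) z - cdf μ z|) atTop (𝓝 0) := by
    simpa using habs.neg
  have hsub : Tendsto (fun n => cdf (μs n) z - cdf μ z) atTop (𝓝 0) :=
    tendsto_of_tendsto_of_tendsto_of_le_of_le hneg habs
      (fun n => neg_abs_le _) (fun n => le_abs_self _)
  have := hsub.add (tendsto_const_nhds (x := cdf μ z))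
  simpa using this

lemma rev_main {μs : ℕ → Measure (Fin d → ℝ)}
    (hμs : ∀ n, IsPermuton (μs n)) (hμ : IsPermuton μ)
    (hS : Tendsto (fun n => ⨆ z : {z : Fin d → ℝ // ∀ i, z i ∈ Set.Icc (0:ℝ) 1},
      |cdf (μs n) z.1 - cdf μ z.1|) atTop (𝓝 0))
    (f : BoundedContinuousFunction (Fin d → ℝ) ℝ) :
    Tendsto (fun n => ∫ x, f x ∂(μs n)) atTop (𝓝 (∫ x, f x ∂μ)) := by
  haveI := hμ.1
  have hpt := rev_pointwise hμs hμ hS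
  refine tendsto_atTop_of_abs_sub (fun ε hε => ?_)
  set K : Set (Fin d → ℝ) := Set.pi Set.univ (fun _ => Set.Icc (0:ℝ) 1) with hKdef
  have hKc : IsCompact K := isCompact_univ_pi fun _ => isCompact_Icc
  have hfu : UniformContinuousOn f K :=
    hKc.uniformContinuousOn_of_continuous f.continuous.continuousOn
  obtain ⟨δ, hδ0, hδ⟩ := Metric.uniformContinuousOn_iff.1 hfu (ε/3) (by linarith)
  obtain ⟨m, hmgt⟩ := exists_nat_gt (1/δ)
  have hm0 : (0:ℝ) < m := lt_trans (by positivity) hmgt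
  have hmn0 : 0 < m := by exact_mod_cast hm0
  have hinvm : 1/(m:ℝ) < δ := by
    rw [div_lt_iff₀ hm0]
    have := (div_lt_iff₀ hδ0).1 hmgt
    nlinarith
  set lo : (Fin d → Fin m) → Fin d → ℝ := fun k i => ((k i : ℕ) : ℝ)/m with hlo
  set ub : (Fin d → Fin m) → Fin d → ℝ := fun k i => (((k i : ℕ) : ℝ) + 1)/m with hub
  set B : (Fin d → Fin m) → Set (Fin d → ℝ) := fun k => box (lo k) (ub k) with hB
  have hlou : ∀ (k : Fin d → Fin m) (i : Fin d), lo k i ≤ ub k i := by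
    intro k i
    simp only [hlo, hub]
    exact (div_le_div_iff_of_pos_right hm0).2 (by linarith)
  have hub1 : ∀ (k : Fin d → Fin m) (i : Fin d), ub k i ≤ 1 := by
    intro k i
    simp only [hub]
    rw [div_le_one hm0]
    exact_mod_cast Nat.succ_le_of_lt (k i).isLt
  have hlo0 : ∀ (k : Fin d → Fin m) (i : Fin d), 0 ≤ lo k i := by
    intro k i; simp only [hlo]; positivity
  have hBmem : ∀ (k : Fin d → Fin m) (y : Fin d → ℝ), y ∈ B k ↔
      ∀ i, y i ∈ Set.Ioc (lo k i) (ub k i) := fun k y => Iff.rfl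
  have hBK : ∀ k, B k ⊆ K := by
    intro k y hy
    rw [(hBmem k y)] at hy
    refine Set.mem_univ_pi.2 fun i => ?_
    exact ⟨le_trans (hlo0 k i) (hy i).1.le, (hy i).2.trans (hub1 k i)⟩
  have hubK : ∀ k, ub k ∈ K := by
    intro k
    refine Set.mem_univ_pi.2 fun i => ?_
    constructor
    · exact le_trans (hlo0 k i) (hlou k i)
    · exact hub1 k i
  have hmeasB : ∀ k, MeasurableSet (B k) := fun k => measurableSet_box _ _
  have hdisj : Pairwise (Function.onFun Disjoint B) := by
    intro k k' hkk'
    obtain ⟨i, hi⟩ := Function.ne_iff.1 hkk'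
    refine Set.disjoint_left.2 fun y hy hy' => ?_
    have h1 := (hBmem k y).1 hy i
    have h2 := (hBmem k' y).1 hy' i
    simp only [hlo, hub] at h1 h2
    have hne : (k i : ℕ) ≠ (k' i : ℕ) := fun h => hi (Fin.ext h)
    rcases hne.lt_or_gt with hlt | hlt
    · have hc : ((k i:ℕ):ℝ) + 1 ≤ ((k' i:ℕ):ℝ) := by exact_mod_cast Nat.succ_le_of_lt hlt
      have := (div_le_div_iff_of_pos_right hm0).2 hc
      have hA := h1.2
      have hBB := h2.1
      linarith
    · have hc : ((k' i:ℕ):ℝ) + 1 ≤ ((k i:ℕ):ℝ) := by exact_mod_cast Nat.succ_le_of_lt hlt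
      have := (div_le_div_iff_of_pos_right hm0).2 hc
      have hA := h2.2
      have hBB := h1.1
      linarith
  set U := ⋃ k, B k with hUdef
  have key : ∀ ν : Measure (Fin d → ℝ), IsPermuton ν →
      |∫ x, f x ∂ν - ∑ k : Fin d → Fin m, f (ub k) * (ν (B k)).toReal| ≤ ε/3 := by
    intro ν hν
    haveI := hν.1
    have hUc : ν Uᶜ = 0 := by
      have hN : ν (⋃ i : Fin d, ({y : Fin d → ℝ | y i < 0} ∪ ({y | y i = 0} ∪ {y | 1 < y i}))) = 0 :=
        measure_iUnion_null fun i => measure_union_null (null_lt_zero hν i)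
          (measure_union_null (null_eq hν i 0) (null_gt_one hν i))
      refine measure_mono_null (fun y hy => ?_) hN
      by_contra hyN
      simp only [Set.mem_iUnion, Set.mem_union, Set.mem_setOf_eq, not_exists, not_or] at hyN
      have hy01 : ∀ i, 0 < y i ∧ y i ≤ 1 := by
        intro i
        obtain ⟨a, b, c⟩ := hyN i
        exact ⟨lt_of_le_of_ne (not_lt.1 a) (Ne.symm b), not_lt.1 c⟩
      have hc1 : ∀ i, 1 ≤ ⌈y i * m⌉₊ := fun i =>
        Nat.one_le_ceil_iff.2 (mul_pos (hy01 i).1 hm0)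
      have hcm : ∀ i, ⌈y i * m⌉₊ ≤ m := fun i => Nat.ceil_le.2 (by nlinarith [(hy01 i).2])
      refine hy (Set.mem_iUnion.2 ⟨fun i => ⟨⌈y i * m⌉₊ - 1,
        by have := hcm i; have := hc1 i; omega⟩, (hBmem _ y).2 fun i => ?_⟩)
      have hcast : ((⌈y i * m⌉₊ - 1 : ℕ) : ℝ) = (⌈y i * m⌉₊ : ℝ) - 1 := by
        rw [Nat.cast_sub (hc1 i)]; norm_num
      constructor
      · show (((⌈y i * m⌉₊ - 1 : ℕ) : ℕ) : ℝ)/m < y i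
        rw [hcast, div_lt_iff₀ hm0]
        have := Nat.ceil_lt_add_one (le_of_lt (mul_pos (hy01 i).1 hm0))
        linarith
      · show y i ≤ ((((⌈y i * m⌉₊ - 1 : ℕ) : ℕ) : ℝ) + 1)/m
        rw [hcast, le_div_iff₀ hm0]
        have := Nat.le_ceil (y i * m)
        linarith
    have hint : Integrable f ν := f.integrable ν
    have hae : ∀ᵐ x ∂ν, x ∈ U := by
      rw [ae_iff]
      exact hUc
    have hres : ν.restrict U = ν := Measure.restrict_eq_self_of_ae_mem hae
    have h1 : ∫ x, f x ∂ν = ∫ x in U, f x ∂ν := by rw [hres]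
    have h2 : ∫ x in U, f x ∂ν = ∑ k : Fin d → Fin m, ∫ x in B k, f x ∂ν := by
      rw [hUdef, integral_iUnion hmeasB hdisj hint.integrableOn, tsum_fintype]
    have hperk : ∀ k, |∫ x in B k, f x ∂ν - f (ub k) * (ν (B k)).toReal|
        ≤ ε/3 * (ν (B k)).toReal := by
      intro k
      have hconst : ∫ _x in B k, f (ub k) ∂ν = (ν (B k)).toReal • f (ub k) := setIntegral_const _
      have hsub : ∫ x in B k, f x ∂ν - f (ub k) * (ν (B k)).toReal
          = ∫ x in B k, (f x - f (ub k)) ∂ν := by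
        rw [integral_sub hint.integrableOn
          (integrableOn_const (measure_lt_top ν _).ne), hconst, smul_eq_mul]
        ring
      rw [hsub, ← Real.norm_eq_abs]
      refine norm_setIntegral_le_of_norm_le_const (measure_lt_top ν _) (fun x hx => ?_)
      have hdx : dist x (ub k) < δ := by
        rw [dist_pi_lt_iff hδ0]
        intro i
        have hxi := (hBmem k x).1 hx i
        rw [Real.dist_eq, abs_sub_comm, abs_of_nonneg (sub_nonneg.2 hxi.2)]
        have hgap : ub k i - lo k i = 1/m := by
          simp only [hub, hlo, div_sub_div_same]
          norm_num
        have := hxi.1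
        linarith
      have := hδ x (hBK k hx) (ub k) (hubK k) hdx
      rw [Real.dist_eq] at this
      rw [Real.norm_eq_abs]
      exact this.le
    have hsumle : ∑ k : Fin d → Fin m, (ν (B k)).toReal ≤ 1 := by
      have hm2 : ν U = ∑ k : Fin d → Fin m, ν (B k) := by
        rw [hUdef, measure_iUnion hdisj hmeasB, tsum_fintype]
      have heq : ∑ k : Fin d → Fin m, (ν (B k)).toReal = (ν U).toReal := by
        rw [hm2, ENNReal.toReal_sum (fun k _ => measure_ne_top ν _)]
      rw [heq]
      calc (ν U).toReal ≤ (1:ENNReal).toReal :=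
            ENNReal.toReal_mono ENNReal.one_ne_top prob_le_one
        _ = 1 := by simp
    calc |∫ x, f x ∂ν - ∑ k : Fin d → Fin m, f (ub k) * (ν (B k)).toReal|
        = |∑ k : Fin d → Fin m, (∫ x in B k, f x ∂ν - f (ub k) * (ν (B k)).toReal)| := by
          rw [Finset.sum_sub_distrib, ← h2, ← h1]
      _ ≤ ∑ k : Fin d → Fin m, |∫ x in B k, f x ∂ν - f (ub k) * (ν (B k)).toReal| :=
          Finset.abs_sum_le_sum_abs _ _
      _ ≤ ∑ k : Fin d → Fin m, ε/3 * (ν (B k)).toReal := Finset.sum_le_sum fun k _ => hperk k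
      _ = ε/3 * ∑ k : Fin d → Fin m, (ν (B k)).toReal := by rw [Finset.mul_sum]
      _ ≤ ε/3 * 1 := mul_le_mul_of_nonneg_left hsumle (by linarith)
      _ = ε/3 := mul_one _
  have hT : Tendsto (fun n => ∑ k : Fin d → Fin m, f (ub k) * ((μs n) (B k)).toReal) atTop
      (𝓝 (∑ k : Fin d → Fin m, f (ub k) * (μ (B k)).toReal)) := by
    refine tendsto_finset_sum _ (fun k _ => ?_)
    have hco : ∀ t : Finset (Fin d), ∀ i, corner (lo k) (ub k) t i ∈ Set.Icc (0:ℝ) 1 := by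
      intro t i
      unfold corner
      split_ifs with h
      · exact ⟨le_trans (hlo0 k i) (hlou k i), hub1 k i⟩
      · exact ⟨hlo0 k i, le_trans (hlou k i) (hub1 k i)⟩
    have hbox : Tendsto (fun n => ((μs n) (B k)).toReal) atTop (𝓝 ((μ (B k)).toReal)) := by
      have he : (fun n => ((μs n) (B k)).toReal) = fun n => ∑ t : Finset (Fin d),
          (-1:ℝ)^((Finset.univ \ t).card) * cdf (μs n) (corner (lo k) (ub k) t) :=
        funext fun n => meas_box (μs n) (hμs n).1 _ _ (hlou k)
      have he2 : (μ (B k)).toReal = ∑ t : Finset (Fin d),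
          (-1:ℝ)^((Finset.univ \ t).card) * cdf μ (corner (lo k) (ub k) t) :=
        meas_box μ hμ.1 _ _ (hlou k)
      rw [he, he2]
      exact tendsto_finset_sum _ (fun t _ => Tendsto.const_mul _ (hpt _ (hco t)))
    exact hbox.const_mul _
  have hTev : ∀ᶠ n in atTop, |(∑ k : Fin d → Fin m, f (ub k) * ((μs n) (B k)).toReal)
      - ∑ k : Fin d → Fin m, f (ub k) * (μ (B k)).toReal| ≤ ε/3 := by
    filter_upwards [(abs_tendsto_zero hT).eventually_lt_const (by linarith : (0:ℝ) < ε/3)]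
      with n hn
    exact hn.le
  filter_upwards [hTev] with n hn
  have t1 := key (μs n) (hμs n)
  have t2 := key μ hμ
  have tri : |∫ x, f x ∂(μs n) - ∫ x, f x ∂μ| ≤
      |∫ x, f x ∂(μs n) - ∑ k : Fin d → Fin m, f (ub k) * ((μs n) (B k)).toReal|
      + (|(∑ k : Fin d → Fin m, f (ub k) * ((μs n) (B k)).toReal)
          - ∑ k : Fin d → Fin m, f (ub k) * (μ (B k)).toReal|
        + |(∑ k : Fin d → Fin m, f (ub k) * (μ (B k)).toReal) - ∫ x, f x ∂μ|) :=
    (abs_sub_le _ _ _).trans (add_le_add le_rfl (abs_sub_le _ _ _))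
  have t2' : |(∑ k : Fin d → Fin m, f (ub k) * (μ (B k)).toReal) - ∫ x, f x ∂μ| ≤ ε/3 := by
    rw [abs_sub_comm]; exact t2
  linarith

end PermutonProofAux

/-- Permutons `μₙ` converge weakly to a permuton `μ` if and only if the distribution
functions `Fₙ` converge uniformly on `[0,1]^d` to `F`. -/
theorem permuton_weak_convergence_iff_unif_cdf {d : ℕ}
    (μs : ℕ → Measure (Fin d → ℝ)) (μ : Measure (Fin d → ℝ))
    (hμs : ∀ n, IsPermuton (μs n)) (hμ : IsPermuton μ) :
    (∀ f : BoundedContinuousFunction (Fin d → ℝ) ℝ,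
        Tendsto (fun n => ∫ x, f x ∂(μs n)) atTop (𝓝 (∫ x, f x ∂μ))) ↔
      Tendsto
        (fun n => ⨆ z : {z : Fin d → ℝ // ∀ i, z i ∈ Set.Icc (0:ℝ) 1},
          |cdf (μs n) z.1 - cdf μ z.1|) atTop (𝓝 0) := by
  constructor
  · intro H
    exact PermutonProofAux.forward_unif hμs hμ
      (PermutonProofAux.tendsto_cdf_of_weak hμs hμ H)
  · intro hS f
    exact PermutonProofAux.rev_main hμs hμ hS f
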